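/- The collection Ŝ contains at most (n+2)^(2^M) assortments, i.e., the cardinality of Ŝ is at most (n+2)^(2^M). -/
import Mathlib


namespace RobustAssortment

/-- `i` is the most preferred product of the assortment `S` under the ranking `σ`. -/
def isTop {n : ℕ} (σ : Equiv.Perm (Fin (n + 1))) (S : Finset (Fin (n + 1)))
    (i : Fin (n + 1)) : Prop :=
  i ∈ S ∧ ∀ j ∈ S, σ i ≤ σ j

instance {n : ℕ} (σ : Equiv.Perm (Fin (n + 1))) (S : Finset (Fin (n + 1)))
    (i : Fin (n + 1)) : Decidable (isTop σ S i) := by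
  unfold isTop; infer_instance
/-- The collection `Ŝ` of candidate assortments. -/
def Shat {n M : ℕ} (Sm : Fin M → Finset (Fin (n + 1))) (r : Fin (n + 1) → ℝ)
    (S : Finset (Fin (n + 1))) : Prop :=
  0 ∈ S ∧ ∀ i' ∈ S, ∀ i : Fin (n + 1), r i' < r i →
    (∀ m : Fin M, i' ∈ Sm m → i ∈ Sm m) → i ∈ S

/-- Lemma 5 of the paper: `|Ŝ| ≤ (n+2)^(2^M)`. -/
theorem statement6 (n M : ℕ) (hn : 1 ≤ n) (hM : 1 ≤ M)
    (r : Fin (n + 1) → ℝ) (hr0 : r 0 = 0) (hr : StrictMono r)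
    (Sm : Fin M → Finset (Fin (n + 1))) (hSm0 : ∀ m, (0 : Fin (n + 1)) ∈ Sm m) :
    {S : Finset (Fin (n + 1)) | Shat Sm r S}.ncard ≤ (n + 2) ^ (2 ^ M) := by
  classical
  -- signature of a product: the set of past assortments containing it
  set sig : Fin (n + 1) → Finset (Fin M) := fun i => Finset.univ.filter (fun m => i ∈ Sm m)
    with hsig
  -- encode S by the minimum of S within each signature class
  set f : Finset (Fin (n + 1)) → (Finset (Fin M) → WithTop (Fin (n + 1))) :=
    fun S T => (S.filter (fun i => sig i = T)).min with hf
  -- membership recovery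
  have key : ∀ S, Shat Sm r S → ∀ i : Fin (n + 1),
      i ∈ S ↔ f S (sig i) ≤ (i : WithTop (Fin (n + 1))) := by
    intro S hS i
    constructor
    · intro hi
      exact Finset.min_le (by simp [hi])
    · intro hle
      have hne : (S.filter (fun j => sig j = sig i)).Nonempty := by
        by_contra h
        rw [Finset.not_nonempty_iff_eq_empty] at h
        simp only [hf, h, Finset.min_empty] at hle
        exact absurd hle (by simp)
      obtain ⟨i', hi'⟩ := Finset.min_of_nonempty hne
      have hmem := Finset.mem_of_min hi'
      rw [Finset.mem_filter] at hmem
      simp only [hf, hi'] at hle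
      have hii : i' ≤ i := by exact_mod_cast hle
      rcases eq_or_lt_of_le hii with h | h
      · exact h ▸ hmem.1
      · refine hS.2 i' hmem.1 i (hr h) ?_
        intro m hm
        have : m ∈ sig i' := by simp [hsig, hm]
        rw [hmem.2] at this
        simpa [hsig] using this
  haveI : Fintype (WithTop (Fin (n + 1))) := inferInstanceAs (Fintype (Option (Fin (n + 1))))
  have hinj : Set.InjOn f {S : Finset (Fin (n + 1)) | Shat Sm r S} := by
    intro S1 h1 S2 h2 hfe
    ext i
    rw [key S1 h1 i, key S2 h2 i, hfe]
  calc {S : Finset (Fin (n + 1)) | Shat Sm r S}.ncard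
      = (f '' {S : Finset (Fin (n + 1)) | Shat Sm r S}).ncard :=
        (Set.ncard_image_of_injOn hinj).symm
    _ ≤ (Set.univ : Set (Finset (Fin M) → WithTop (Fin (n + 1)))).ncard :=
        Set.ncard_le_ncard (Set.subset_univ _) Set.finite_univ
    _ = Fintype.card (Finset (Fin M) → WithTop (Fin (n + 1))) := by
        rw [Set.ncard_univ, Nat.card_eq_fintype_card]
    _ = (n + 2) ^ (2 ^ M) := by
        rw [Fintype.card_fun]
        congr 1
        · calc Fintype.card (WithTop (Fin (n + 1)))
              = Fintype.card (Option (Fin (n + 1))) := Fintype.card_congr (Equiv.refl _)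
            _ = n + 2 := by rw [Fintype.card_option, Fintype.card_fin]
        · rw [Fintype.card_finset, Fintype.card_fin]

end RobustAssortment
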